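/- arXiv:2511.23039 — 2 statements merged into one kernel-verified Lean document; each statement's English description precedes it below -/
import Mathlib

section
/- Let (X,d) be a metric space, (A_n) a sequence of closed subsets converging in Hausdorff distance to a closed set A_∞, and μ a Borel measure on X with μ(⋃_{n=1}^∞ A_n) < ∞. Then μ(A_∞) ≥ limsup_{n→∞} μ(A_n). -/
open Metric Set Filter Topology MeasureTheory ENNReal

theorem measure_limsup_le_of_hausdorff_tendsto {X : Type*} [MetricSpace X]
    [MeasurableSpace X] [BorelSpace X]
    (A : ℕ → Set X) (Alim : Set X)
    (hAcl : ∀ n, IsClosed (A n)) (hAlimcl : IsClosed Alim)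
    (hconv : Tendsto (fun n => EMetric.hausdorffEdist (A n) Alim) atTop (𝓝 0))
    (μ : Measure X) (hfin : μ (⋃ n, A n) < ⊤) :
    Filter.limsup (fun n => μ (A n)) atTop ≤ μ Alim := by
  set U : Set X := ⋃ n, A n with hU
  set C : ℕ → Set X := fun k => cthickening (1 / (k + 1)) Alim ∩ U with hC
  have hCmeas : ∀ k, MeasurableSet (C k) := fun k =>
    (isClosed_cthickening.measurableSet).inter
      (MeasurableSet.iUnion fun n => (hAcl n).measurableSet)
  have hCanti : Antitone C := by
    intro j k hjk
    apply inter_subset_inter_left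
    apply cthickening_mono
    apply one_div_le_one_div_of_le (by positivity)
    exact_mod_cast by omega
  have step1 : ∀ k : ℕ, Filter.limsup (fun n => μ (A n)) atTop ≤ μ (C k) := by
    intro k
    have hε : (0 : ℝ≥0∞) < ENNReal.ofReal (1 / (k + 1)) :=
      ENNReal.ofReal_pos.2 (by positivity)
    have hev : ∀ᶠ n in atTop,
        EMetric.hausdorffEdist (A n) Alim < ENNReal.ofReal (1 / (k + 1)) :=
      hconv.eventually (gt_mem_nhds hε)
    have hev2 : ∀ᶠ n in atTop, μ (A n) ≤ μ (C k) := by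
      filter_upwards [hev] with n hn
      apply measure_mono
      intro x hx
      refine ⟨?_, mem_iUnion.2 ⟨n, hx⟩⟩
      have h1 : EMetric.infEdist x Alim ≤ EMetric.hausdorffEdist (A n) Alim :=
        EMetric.infEdist_le_hausdorffEdist_of_mem hx
      exact mem_cthickening_iff.2 (h1.trans hn.le)
    exact limsup_le_of_le (by isBoundedDefault) hev2
  have hfin' : ∃ k, μ (C k) ≠ ⊤ :=
    ⟨0, ((measure_mono (inter_subset_right)).trans_lt hfin).ne⟩
  have key : μ (⋂ k, C k) = ⨅ k, μ (C k) :=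
    hCanti.directed_ge.measure_iInter (fun k => (hCmeas k).nullMeasurableSet) hfin'
  have hsub : (⋂ k, C k) ⊆ Alim := by
    intro x hx
    have h0 : EMetric.infEdist x Alim ≤ 0 := by
      have ht : Tendsto (fun k : ℕ => ENNReal.ofReal (1 / (k + 1))) atTop (𝓝 0) := by
        rw [show (0 : ℝ≥0∞) = ENNReal.ofReal 0 by simp]
        exact ENNReal.tendsto_ofReal tendsto_one_div_add_atTop_nhds_zero_nat
      refine ge_of_tendsto' ht fun k => ?_
      have := (mem_iInter.1 hx k).1
      exact mem_cthickening_iff.1 this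
    have : x ∈ closure Alim :=
      EMetric.mem_closure_iff_infEdist_zero.2 (le_antisymm h0 zero_le)
    rwa [hAlimcl.closure_eq] at this
  calc Filter.limsup (fun n => μ (A n)) atTop ≤ ⨅ k, μ (C k) := le_iInf step1
    _ = μ (⋂ k, C k) := key.symm
    _ ≤ μ Alim := measure_mono hsub
end

section
/- Let (X,d) be a metric space, (A_n) closed subsets with d_H(A_n, A_∞) → 0 for a closed set A_∞, and μ a Borel measure with μ(⋃_n A_n) < ∞. If there exists m > 0 such that μ(A_n) ≥ m for infinitely many n, then μ(A_∞) ≥ m. -/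
open Metric Set Filter Topology MeasureTheory ENNReal

theorem measure_limit_ge_of_frequently {X : Type*} [MetricSpace X]
    [MeasurableSpace X] [BorelSpace X]
    (A : ℕ → Set X) (Alim : Set X)
    (hAcl : ∀ n, IsClosed (A n)) (hAlimcl : IsClosed Alim)
    (hconv : Tendsto (fun n => EMetric.hausdorffEdist (A n) Alim) atTop (𝓝 0))
    (μ : Measure X) (hfin : μ (⋃ n, A n) < ⊤)
    (m : ℝ≥0∞) (hm : 0 < m)
    (hfreq : ∃ᶠ n in atTop, m ≤ μ (A n)) :
    m ≤ μ Alim := by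
  set U : Set X := ⋃ n, A n with hU
  set s : ℕ → Set X := fun k => Metric.thickening (1/(k+1) : ℝ) Alim ∩ U with hs
  have hAnti : Antitone s := by
    intro i j hij
    apply Set.inter_subset_inter_left
    apply Metric.thickening_mono
    apply one_div_le_one_div_of_le (by positivity)
    exact_mod_cast Nat.succ_le_succ hij
  have hmeas : ∀ k, NullMeasurableSet (s k) μ := by
    intro k
    exact ((Metric.isOpen_thickening.measurableSet).inter
      (MeasurableSet.iUnion fun n => (hAcl n).measurableSet)).nullMeasurableSet
  have hfin' : ∃ k, μ (s k) ≠ ∞ := by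
    refine ⟨0, ?_⟩
    exact ne_of_lt (lt_of_le_of_lt (measure_mono Set.inter_subset_right) hfin)
  have hinter : ⋂ k, s k = Alim ∩ U := by
    apply Set.Subset.antisymm
    · intro x hx
      simp only [Set.mem_iInter, hs, Set.mem_inter_iff] at hx
      refine ⟨?_, (hx 0).2⟩
      have h0 : EMetric.infEdist x Alim = 0 := by
        refine le_antisymm ?_ zero_le
        have htd : Tendsto (fun k : ℕ => ENNReal.ofReal (1/(k+1) : ℝ)) atTop (𝓝 0) := by
          rw [show (0 : ℝ≥0∞) = ENNReal.ofReal 0 by simp]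
          exact ENNReal.tendsto_ofReal tendsto_one_div_add_atTop_nhds_zero_nat
        refine ge_of_tendsto htd (Eventually.of_forall fun k => ?_)
        exact le_of_lt (Metric.mem_thickening_iff_infEdist_lt.mp (hx k).1)
      rw [← hAlimcl.closure_eq]
      exact EMetric.mem_closure_iff_infEdist_zero.mpr h0
    · intro x hx
      simp only [Set.mem_iInter, hs, Set.mem_inter_iff]
      intro k
      refine ⟨Metric.self_subset_thickening (by positivity) Alim hx.1, hx.2⟩
  have hk : ∀ k, m ≤ μ (s k) := by
    intro k
    set ε : ℝ≥0∞ := ENNReal.ofReal (1/(k+1) : ℝ) with hε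
    have hεpos : 0 < ε := by
      rw [hε]; exact ENNReal.ofReal_pos.mpr (by positivity)
    have hev : ∀ᶠ n in atTop, EMetric.hausdorffEdist (A n) Alim < ε :=
      hconv.eventually (gt_mem_nhds hεpos)
    obtain ⟨n, hn1, hn2⟩ := (hfreq.and_eventually hev).exists
    refine le_trans hn1 (measure_mono ?_)
    intro x hx
    refine ⟨Metric.mem_thickening_iff_infEdist_lt.mpr ?_,
      Set.mem_iUnion.mpr ⟨n, hx⟩⟩
    exact lt_of_le_of_lt (EMetric.infEdist_le_hausdorffEdist_of_mem hx) hn2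
  have := tendsto_measure_iInter_atTop hmeas hAnti hfin'
  rw [hinter] at this
  have hle : m ≤ μ (Alim ∩ U) := ge_of_tendsto this (Eventually.of_forall hk)
  exact le_trans hle (measure_mono Set.inter_subset_left)
end
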